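/- Let p₁,…,pₘ ∈ ℂ[x₁,…,xₘ] be polynomials of degrees d₁,…,dₘ. If the system p₁ = ⋯ = pₘ = 0 has only finitely many solutions in ℂᵐ, then the number of isolated solutions is at most ∏ᵢ dᵢ (the classical Bézout bound), in the case m = 2 for two plane curves of degrees d₁ and d₂ with finite intersection: the intersection has at most d₁·d₂ points. -/

import Mathlib

open MvPolynomial

section BezoutAux

lemma degAdd (u v : Fin 2 →₀ ℕ) : (u+v).degree = u.degree + v.degree := by
  simp only [Finsupp.degree_eq_weight_one, map_add]

lemma deg_eq (d : Fin 2 →₀ ℕ) : d.degree = d.sum fun _ e => e := by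
  simp [Finsupp.degree, Finsupp.sum]
  rfl

lemma top_ne_zero {f : MvPolynomial (Fin 2) ℂ} (hf : f ≠ 0) :
    homogeneousComponent f.totalDegree f ≠ 0 := by
  obtain ⟨d, hd, hdeg⟩ := Finset.exists_mem_eq_sup f.support
    (by simpa using hf) (fun s => s.sum fun _ e => e)
  intro h
  have := coeff_homogeneousComponent (φ := f) f.totalDegree d
  rw [h] at this
  simp only [coeff_zero] at this
  rw [if_pos] at this
  · exact (mem_support_iff.mp hd) this.symm
  · rw [deg_eq, totalDegree, hdeg]

lemma hc_mul (a b : MvPolynomial (Fin 2) ℂ) :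
    homogeneousComponent (a.totalDegree + b.totalDegree) (a * b) =
      homogeneousComponent a.totalDegree a * homogeneousComponent b.totalDegree b := by
  ext d
  rw [coeff_homogeneousComponent, coeff_mul, coeff_mul]
  simp only [coeff_homogeneousComponent]
  split_ifs with hd
  · apply Finset.sum_congr rfl
    intro x hx
    rw [Finset.HasAntidiagonal.mem_antidiagonal] at hx
    have hsum : x.1.degree + x.2.degree = a.totalDegree + b.totalDegree := by
      rw [← hd, ← hx]; rw [degAdd]
    by_cases h1 : x.1.degree = a.totalDegree
    · have h2 : x.2.degree = b.totalDegree := by omega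
      rw [if_pos h1, if_pos h2]
    · rw [if_neg h1]
      by_cases hca : coeff x.1 a = 0
      · rw [hca, zero_mul]
        split_ifs <;> ring
      · have hle : x.1.degree ≤ a.totalDegree := by
          rw [deg_eq]; exact le_totalDegree (mem_support_iff.mpr hca)
        have h2 : b.totalDegree < x.2.degree := by omega
        have hcb : coeff x.2 b = 0 := by
          by_contra hcb
          have : x.2.degree ≤ b.totalDegree := by
            rw [deg_eq]; exact le_totalDegree (mem_support_iff.mpr hcb)
          omega
        rw [hcb, mul_zero]
        split_ifs <;> ring
  · symm
    apply Finset.sum_eq_zero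
    intro x hx
    rw [Finset.HasAntidiagonal.mem_antidiagonal] at hx
    by_cases h1 : x.1.degree = a.totalDegree
    · by_cases h2 : x.2.degree = b.totalDegree
      · exfalso; apply hd
        rw [← hx, degAdd, h1, h2]
      · rw [if_neg h2, mul_zero]
    · rw [if_neg h1, zero_mul]

lemma totalDegree_mul_eq {a b : MvPolynomial (Fin 2) ℂ} (ha : a ≠ 0) (hb : b ≠ 0) :
    (a * b).totalDegree = a.totalDegree + b.totalDegree := by
  refine le_antisymm (totalDegree_mul a b) ?_
  by_contra h
  push_neg at h
  have := homogeneousComponent_eq_zero (a.totalDegree + b.totalDegree) (a*b) h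
  rw [hc_mul] at this
  exact mul_ne_zero (top_ne_zero ha) (top_ne_zero hb) this

lemma aeval_eq_eval' (x : Fin 1 → ℂ) (g : MvPolynomial (Fin 1) ℂ) : aeval x g = eval x g := by
  rw [← coe_aeval_eq_eval]; rfl

lemma zeros_infinite_aux {f : MvPolynomial (Fin 2) ℂ} (hf : f ≠ 0)
    (hdeg : 1 ≤ degreeOf 0 f) :
    {x : Fin 2 → ℂ | eval x f = 0}.Infinite := by
  have hF : finSuccEquiv ℂ 1 f ≠ 0 := by
    intro h
    apply hf
    have := congrArg (finSuccEquiv ℂ 1).symm h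
    simpa using this
  set F := finSuccEquiv ℂ 1 f with hFdef
  have hk : F.natDegree = degreeOf 0 f := natDegree_finSuccEquiv f
  set c := F.leadingCoeff with hcdef
  have hc : c ≠ 0 := Polynomial.leadingCoeff_ne_zero.mpr hF
  set chat := aeval (R := ℂ) (fun _ : Fin 1 => (Polynomial.X : Polynomial ℂ)) c with hchat
  have hinj : Function.Injective (aeval (fun _ : Fin 1 => Polynomial.X) :
      MvPolynomial (Fin 1) ℂ →ₐ[ℂ] Polynomial ℂ) := by
    have hcomp : (Polynomial.aeval (X 0 : MvPolynomial (Fin 1) ℂ)).comp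
        (aeval (fun _ : Fin 1 => Polynomial.X) : MvPolynomial (Fin 1) ℂ →ₐ[ℂ] Polynomial ℂ) =
        AlgHom.id ℂ _ := by
      apply algHom_ext
      intro i
      have : i = 0 := Subsingleton.elim _ _
      simp [this]
    intro u v huv
    have := congrArg (Polynomial.aeval (X 0 : MvPolynomial (Fin 1) ℂ)) huv
    have h1 := congrFun (congrArg DFunLike.coe hcomp) u
    have h2 := congrFun (congrArg DFunLike.coe hcomp) v
    simp only [AlgHom.coe_comp, Function.comp_apply, AlgHom.coe_id, id_eq] at h1 h2
    rw [h1, h2] at this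
    exact this
  have hchat0 : chat ≠ 0 := fun h => hc (hinj (by simpa using h))
  have heval : ∀ a : ℂ, Polynomial.eval a chat = eval (fun _ : Fin 1 => a) c := by
    intro a
    have hcomp : (Polynomial.aeval (a : ℂ)).comp
        (aeval (fun _ : Fin 1 => Polynomial.X) : MvPolynomial (Fin 1) ℂ →ₐ[ℂ] Polynomial ℂ) =
        aeval (fun _ : Fin 1 => a) := by
      apply algHom_ext; intro i; simp
    have := congrFun (congrArg DFunLike.coe hcomp) c
    simp only [AlgHom.coe_comp, Function.comp_apply] at this
    rw [← aeval_eq_eval', ← this, hchat]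
    rw [Polynomial.coe_aeval_eq_eval]
  have hG : {a : ℂ | Polynomial.eval a chat ≠ 0}.Infinite := by
    have h1 := (Polynomial.finite_setOf_isRoot hchat0).infinite_compl
    exact h1.mono (fun a ha => ha)
  have key : ∀ a : ℂ, Polynomial.eval a chat ≠ 0 →
      ∃ y : ℂ, eval (Fin.cons y (fun _ => a) : Fin 2 → ℂ) f = 0 := by
    intro a ha
    set s : Fin 1 → ℂ := fun _ => a with hs
    set g := Polynomial.map (eval s) F with hg
    have hcoe : g.coeff F.natDegree = eval s c := by
      rw [hg, Polynomial.coeff_map, hcdef]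
      rfl
    have hgne : g.coeff F.natDegree ≠ 0 := by
      rw [hcoe, ← heval a]; exact ha
    have hgz : g ≠ 0 := fun h => hgne (by simp [h])
    have hdeg1 : 1 ≤ g.natDegree :=
      le_trans (by omega) (Polynomial.le_natDegree_of_ne_zero hgne)
    have hgdeg : g.degree ≠ 0 := by
      rw [Polynomial.degree_eq_natDegree hgz]
      intro hcontra
      have : g.natDegree = 0 := by exact_mod_cast hcontra
      omega
    obtain ⟨y, hy⟩ := IsAlgClosed.exists_root g hgdeg
    refine ⟨y, ?_⟩
    rw [eval_eq_eval_mv_eval']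
    exact hy
  classical
  set r : ℂ → ℂ := fun a =>
    if h : ∃ y, eval (Fin.cons y (fun _ => a) : Fin 2 → ℂ) f = 0 then h.choose else 0 with hr
  set Φ : ℂ → (Fin 2 → ℂ) := fun a => Fin.cons (r a) (fun _ => a) with hΦ
  have hΦ1 : ∀ a, Φ a 1 = a := fun a => rfl
  have hmaps : ∀ a ∈ {a : ℂ | Polynomial.eval a chat ≠ 0},
      Φ a ∈ {x : Fin 2 → ℂ | eval x f = 0} := by
    intro a ha
    have hex := key a ha
    show eval (Fin.cons (r a) (fun _ => a)) f = 0
    rw [hr]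
    simp only [dif_pos hex]
    exact hex.choose_spec
  have hinjOn : Set.InjOn Φ {a : ℂ | Polynomial.eval a chat ≠ 0} := by
    intro a _ b _ hab
    have := congrFun hab 1
    rwa [hΦ1, hΦ1] at this
  exact (hG.image hinjOn).mono (Set.image_subset_iff.mpr hmaps)

lemma exists_C_of_zeros_finite {f : MvPolynomial (Fin 2) ℂ}
    (h : {x : Fin 2 → ℂ | eval x f = 0}.Finite) : ∃ c : ℂ, c ≠ 0 ∧ f = C c := by
  by_cases hf : f = 0
  · exfalso
    have huniv : {x : Fin 2 → ℂ | eval x f = 0} = Set.univ := by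
      ext x; simp [hf]
    exact Set.infinite_univ (huniv ▸ h)
  by_cases hdeg : 1 ≤ f.totalDegree
  · exfalso
    have h01 : 1 ≤ degreeOf 0 f ∨ 1 ≤ degreeOf 1 f := by
      by_contra hc
      push_neg at hc
      have h0 : degreeOf 0 f = 0 := by omega
      have h1 : degreeOf 1 f = 0 := by omega
      have : f.totalDegree = 0 := by
        rw [totalDegree_eq_zero_iff]
        intro m hm x
        have hx := degreeOf_eq_sup 0 f ▸ h0
        have hy := degreeOf_eq_sup 1 f ▸ h1
        fin_cases x
        · exact Nat.le_zero.mp (hx ▸ Finset.le_sup (f := fun m => m 0) hm)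
        · exact Nat.le_zero.mp (hy ▸ Finset.le_sup (f := fun m => m 1) hm)
      omega
    rcases h01 with h0 | h1
    · exact (zeros_infinite_aux hf h0) h
    · set f' := rename (Equiv.swap (0 : Fin 2) 1) f with hf'
      have hf'0 : f' ≠ 0 := by
        intro hcontra
        exact hf ((rename_injective _ (Equiv.injective _)) (by simpa using hcontra))
      have hdeg0 : 1 ≤ degreeOf 0 f' := by
        have := degreeOf_rename_of_injective (p := f) (i := (1 : Fin 2))
          (Equiv.injective (Equiv.swap (0 : Fin 2) 1))
        rw [Equiv.swap_apply_right] at this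
        rw [hf', this]
        exact h1
      have hinf := zeros_infinite_aux hf'0 hdeg0
      have : {x : Fin 2 → ℂ | eval x f' = 0} =
          (fun x : Fin 2 → ℂ => x ∘ (Equiv.swap (0 : Fin 2) 1)) ⁻¹' {x | eval x f = 0} := by
        ext x
        simp [hf', eval_rename]
      rw [this] at hinf
      have hinjglob : Function.Injective
          (fun x : Fin 2 → ℂ => x ∘ (Equiv.swap (0 : Fin 2) 1)) := by
        intro a b hab
        funext i
        have := congrFun hab ((Equiv.swap (0 : Fin 2) 1).symm i)
        simpa using this
      exact hinf (h.preimage hinjglob.injOn)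
  · push_neg at hdeg
    have feq : f = C (coeff 0 f) := by
      ext m
      by_cases hm : m = 0
      · simp [hm]
      · rw [coeff_C, if_neg (Ne.symm hm)]
        by_contra hne
        have hmem : m ∈ f.support := mem_support_iff.mpr hne
        have hz := (totalDegree_eq_zero_iff _ f).mp (by omega) m hmem
        exact hm (Finsupp.ext fun i => hz i)
    refine ⟨coeff 0 f, fun hc => hf (by rw [feq, hc, map_zero]), feq⟩

lemma eq_C_of_totalDegree_zero {f : MvPolynomial (Fin 2) ℂ} (h : f.totalDegree = 0) :
    f = C (coeff 0 f) := by
  ext m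
  by_cases hm : m = 0
  · simp [hm]
  · rw [coeff_C, if_neg (Ne.symm hm)]
    by_contra hne
    have hmem : m ∈ f.support := mem_support_iff.mpr hne
    have hz := (totalDegree_eq_zero_iff _ f).mp h m hmem
    exact hm (Finsupp.ext fun i => hz i)

def Tc (d : ℕ) : ℕ := ∑ k ∈ Finset.range (d+1), (k+1)

lemma Tc_succ (d : ℕ) : Tc (d+1) = Tc d + (d+2) := by
  simp [Tc, Finset.sum_range_succ]

lemma Tc_identity (a b e : ℕ) : Tc (a+b+e) + Tc e = Tc (a+e) + Tc (b+e) + a*b := by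
  induction a with
  | zero => simp [Nat.zero_add]; ring
  | succ a ih =>
    have h1 : a+1+b+e = (a+b+e)+1 := by omega
    have h2 : a+1+e = (a+e)+1 := by omega
    rw [h1, Tc_succ, h2, Tc_succ, Nat.succ_mul]
    omega

def Fd (d : ℕ) : Finset (ℕ × ℕ) := (Finset.range (d+1)).biUnion Finset.HasAntidiagonal.antidiagonal

lemma mem_Fd {d : ℕ} {v : ℕ × ℕ} : v ∈ Fd d ↔ v.1 + v.2 ≤ d := by
  simp only [Fd, Finset.mem_biUnion, Finset.mem_range, Finset.HasAntidiagonal.mem_antidiagonal]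
  constructor
  · rintro ⟨k, hk, rfl⟩; omega
  · intro h; exact ⟨v.1 + v.2, by omega, rfl⟩

lemma card_Fd (d : ℕ) : (Fd d).card = Tc d := by
  rw [Fd, Finset.card_biUnion]
  · simp [Tc, Finset.Nat.card_antidiagonal]
  · intro x _ y _ hxy
    rw [Function.onFun, Finset.disjoint_left]
    intro v hv hv'
    rw [Finset.HasAntidiagonal.mem_antidiagonal] at hv hv'
    exact hxy (hv ▸ hv')

noncomputable def Beq : (Fin 2 →₀ ℕ) ≃ ℕ × ℕ :=
  Finsupp.equivFunOnFinite.trans (piFinTwoEquiv fun _ => ℕ)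

lemma sum_eq (n : Fin 2 →₀ ℕ) : (n.sum fun _ e => e) = n 0 + n 1 := by
  rw [Finsupp.sum_fintype _ _ (fun _ => rfl), Fin.sum_univ_two]

noncomputable def Eeq (d : ℕ) :
    {n : Fin 2 →₀ ℕ | (n.sum fun _ e => e) ≤ d} ≃ {v : ℕ × ℕ // v ∈ Fd d} :=
  (Beq.subtypeEquiv (fun n => by
    rw [Set.mem_setOf_eq, sum_eq]
    show _ ↔ (Beq n) ∈ Fd d
    rw [mem_Fd]
    rfl))

lemma finrank_V (d : ℕ) :
    Module.finrank ℂ (restrictTotalDegree (Fin 2) ℂ d) = Tc d := by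
  classical
  haveI : Fintype {n : Fin 2 →₀ ℕ | (n.sum fun _ e => e) ≤ d} :=
    Fintype.ofEquiv _ (Eeq d).symm
  rw [show restrictTotalDegree (Fin 2) ℂ d =
      restrictSupport ℂ {n : Fin 2 →₀ ℕ | (n.sum fun _ e => e) ≤ d} from rfl,
    Module.finrank_eq_card_basis
    (basisRestrictSupport ℂ {n : Fin 2 →₀ ℕ | (n.sum fun _ e => e) ≤ d})]
  rw [← Nat.card_eq_fintype_card, Nat.card_congr (Eeq d), Nat.card_eq_finsetCard, card_Fd]

noncomputable def evalLM (x : Fin 2 → ℂ) : MvPolynomial (Fin 2) ℂ →ₗ[ℂ] ℂ where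
  toFun f := eval x f
  map_add' := by simp
  map_smul' := by simp [smul_eval]

lemma interp {S : Set (Fin 2 → ℂ)} (hS : S.Finite) {s : Fin 2 → ℂ} (hs : s ∈ S) :
    ∃ f : MvPolynomial (Fin 2) ℂ, f.totalDegree ≤ hS.toFinset.card ∧
      eval s f = 1 ∧ ∀ t ∈ S, t ≠ s → eval t f = 0 := by
  classical
  set g : (Fin 2 → ℂ) → MvPolynomial (Fin 2) ℂ := fun t =>
    if h : ∃ i, t i ≠ s i then C (s h.choose - t h.choose)⁻¹ * (X h.choose - C (t h.choose))
    else 1 with hg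
  have hgdeg : ∀ t, (g t).totalDegree ≤ 1 := by
    intro t
    rw [hg]
    simp only []
    split_ifs with h
    · refine le_trans (totalDegree_mul _ _) ?_
      rw [totalDegree_C, zero_add]
      refine le_trans (totalDegree_sub_C_le _ _) ?_
      simp [totalDegree_X]
    · simp
  have hgeval0 : ∀ t ≠ s, eval t (g t) = 0 := by
    intro t ht
    have hex : ∃ i, t i ≠ s i := by
      by_contra hc
      push_neg at hc
      exact ht (funext hc)
    rw [hg]
    simp only []
    rw [dif_pos hex]
    simp
  have hgeval1 : ∀ t ≠ s, eval s (g t) = 1 := by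
    intro t ht
    have hex : ∃ i, t i ≠ s i := by
      by_contra hc
      push_neg at hc
      exact ht (funext hc)
    rw [hg]
    simp only []
    rw [dif_pos hex, map_mul]
    simp only [eval_C, map_sub, eval_X]
    rw [inv_mul_cancel₀]
    exact sub_ne_zero.mpr (Ne.symm hex.choose_spec)
  refine ⟨∏ t ∈ hS.toFinset.erase s, g t, ?_, ?_, ?_⟩
  · refine le_trans (totalDegree_finset_prod _ _) ?_
    refine le_trans (Finset.sum_le_sum fun t _ => hgdeg t) ?_
    simp only [Finset.sum_const, smul_eq_mul, mul_one]
    exact le_trans (Finset.card_le_card (Finset.erase_subset _ _)) le_rfl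
  · rw [map_prod]
    refine Finset.prod_eq_one fun t ht => ?_
    exact hgeval1 t (Finset.ne_of_mem_erase ht)
  · intro t htS hts
    rw [map_prod]
    refine Finset.prod_eq_zero (i := t) ?_ ?_
    · exact Finset.mem_erase.mpr ⟨hts, hS.mem_toFinset.mpr htS⟩
    · exact hgeval0 t hts

end BezoutAux

set_option maxHeartbeats 1000000 in
set_option synthInstance.maxHeartbeats 400000 in
theorem bezout_plane_curves (p q : MvPolynomial (Fin 2) ℂ)
    (hfin : {x : Fin 2 → ℂ | eval x p = 0 ∧ eval x q = 0}.Finite) :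
    {x : Fin 2 → ℂ | eval x p = 0 ∧ eval x q = 0}.ncard ≤
      p.totalDegree * q.totalDegree := by
  classical
  set Z := {x : Fin 2 → ℂ | eval x p = 0 ∧ eval x q = 0} with hZdef
  set m := p.totalDegree with hm
  set n := q.totalDegree with hn
  by_cases hm0 : m = 0
  · suffices hempty : Z = ∅ by
      rw [hempty]; simp
    rw [Set.eq_empty_iff_forall_notMem]
    rintro x ⟨hxp, hxq⟩
    by_cases hp0 : p = 0
    · have hZq : Z = {x : Fin 2 → ℂ | eval x q = 0} := by
        ext y; simp [hZdef, hp0]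
      obtain ⟨c, hc0, hc⟩ := exists_C_of_zeros_finite (f := q) (hZq ▸ hfin)
      rw [hc] at hxq
      simp at hxq
      exact hc0 hxq
    · have := eq_C_of_totalDegree_zero (f := p) hm0
      rw [this] at hxp
      simp at hxp
      exact hp0 (by rw [this, hxp, map_zero])
  by_cases hn0 : n = 0
  · suffices hempty : Z = ∅ by
      rw [hempty]; simp
    rw [Set.eq_empty_iff_forall_notMem]
    rintro x ⟨hxp, hxq⟩
    by_cases hq0 : q = 0
    · have hZp : Z = {x : Fin 2 → ℂ | eval x p = 0} := by
        ext y; simp [hZdef, hq0]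
      obtain ⟨c, hc0, hc⟩ := exists_C_of_zeros_finite (f := p) (hZp ▸ hfin)
      rw [hc] at hxp
      simp at hxp
      exact hc0 hxp
    · have := eq_C_of_totalDegree_zero (f := q) hn0
      rw [this] at hxq
      simp at hxq
      exact hq0 (by rw [this, hxq, map_zero])
  have hp0 : p ≠ 0 := fun h => hm0 (by rw [hm, h, totalDegree_zero])
  have hq0 : q ≠ 0 := fun h => hn0 (by rw [hn, h, totalDegree_zero])
  have hcop : ∀ d : MvPolynomial (Fin 2) ℂ, d ∣ q → d ∣ p → ¬ Prime d := by
    intro d hdq hdp hprime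
    have hsub : {x : Fin 2 → ℂ | eval x d = 0} ⊆ Z := by
      intro x hx
      obtain ⟨e, he⟩ := hdp
      obtain ⟨e', he'⟩ := hdq
      constructor
      · rw [he, map_mul, hx, zero_mul]
      · rw [he', map_mul, hx, zero_mul]
    have hdfin : {x : Fin 2 → ℂ | eval x d = 0}.Finite := hfin.subset hsub
    obtain ⟨c, hc0, hc⟩ := exists_C_of_zeros_finite hdfin
    refine hprime.not_isUnit (hc ▸ IsUnit.of_mul_eq_one (a := C c) (C c⁻¹) ?_)
    rw [← map_mul, mul_inv_cancel₀ hc0, map_one]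
  set N := Z.ncard with hN
  set S' := hfin.toFinset with hS'
  have hScard : S'.card = N := (Set.ncard_eq_toFinset_card _ hfin).symm
  set φ : (restrictTotalDegree (Fin 2) ℂ (n + N) × restrictTotalDegree (Fin 2) ℂ (m + N))
      →ₗ[ℂ] MvPolynomial (Fin 2) ℂ :=
    LinearMap.coprod ((LinearMap.mulRight ℂ p).comp (restrictTotalDegree (Fin 2) ℂ (n + N)).subtype)
      ((LinearMap.mulRight ℂ q).comp (restrictTotalDegree (Fin 2) ℂ (m + N)).subtype) with hφ
  have hψ1mem : ∀ c : restrictTotalDegree (Fin 2) ℂ N,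
      (c : MvPolynomial (Fin 2) ℂ) * q ∈ restrictTotalDegree (Fin 2) ℂ (n + N) := by
    intro c
    have hc := c.2
    rw [mem_restrictTotalDegree] at hc ⊢
    refine le_trans (totalDegree_mul _ _) ?_
    omega
  have hψ2mem : ∀ c : restrictTotalDegree (Fin 2) ℂ N,
      -((c : MvPolynomial (Fin 2) ℂ) * p) ∈ restrictTotalDegree (Fin 2) ℂ (m + N) := by
    intro c
    have hc := c.2
    rw [mem_restrictTotalDegree] at hc ⊢
    rw [totalDegree_neg]
    refine le_trans (totalDegree_mul _ _) ?_
    omega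
  set ψ : restrictTotalDegree (Fin 2) ℂ N →ₗ[ℂ]
      (restrictTotalDegree (Fin 2) ℂ (n + N) × restrictTotalDegree (Fin 2) ℂ (m + N)) :=
    LinearMap.prod
      (((LinearMap.mulRight ℂ q).comp (restrictTotalDegree (Fin 2) ℂ N).subtype).codRestrict
        (restrictTotalDegree (Fin 2) ℂ (n + N)) hψ1mem)
      (((-(LinearMap.mulRight ℂ p)).comp (restrictTotalDegree (Fin 2) ℂ N).subtype).codRestrict
        (restrictTotalDegree (Fin 2) ℂ (m + N)) (fun c => by simpa using hψ2mem c)) with hψ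
  have hψinj : Function.Injective ψ := by
    rw [injective_iff_map_eq_zero]
    intro c hc
    have h1 : (c : MvPolynomial (Fin 2) ℂ) * q = 0 := by
      have := congrArg (fun z => ((Prod.fst z : restrictTotalDegree (Fin 2) ℂ (n + N)) :
        MvPolynomial (Fin 2) ℂ)) hc
      simp [hψ, -ZeroMemClass.coe_eq_zero, -Submodule.coe_eq_zero] at this
      exact this
    rcases mul_eq_zero.mp h1 with h | h
    · exact Subtype.ext h
    · exact absurd h hq0
  have hker : LinearMap.ker φ = LinearMap.range ψ := by
    apply le_antisymm
    · rintro ⟨a, b⟩ hab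
      have habeq : (a : MvPolynomial (Fin 2) ℂ) * p + (b : MvPolynomial (Fin 2) ℂ) * q = 0 := by
        simpa [hφ] using hab
      by_cases ha0 : (a : MvPolynomial (Fin 2) ℂ) = 0
      · have hb0 : (b : MvPolynomial (Fin 2) ℂ) = 0 := by
          rw [ha0, zero_mul, zero_add] at habeq
          rcases mul_eq_zero.mp habeq with h | h
          · exact h
          · exact absurd h hq0
        refine ⟨0, ?_⟩
        rw [map_zero]
        exact (Prod.ext (Subtype.ext (by simp [ha0])) (Subtype.ext (by simp [hb0]))).symm
      · have hdvd : q ∣ (a : MvPolynomial (Fin 2) ℂ) * p := by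
          refine ⟨-(b : MvPolynomial (Fin 2) ℂ), ?_⟩
          linear_combination habeq
        have hqa : q ∣ (a : MvPolynomial (Fin 2) ℂ) :=
          UniqueFactorizationMonoid.dvd_of_dvd_mul_left_of_no_prime_factors hq0
            (fun d hdq hdp => hcop d hdq hdp) hdvd
        obtain ⟨c, hc⟩ := hqa
        have hc0 : c ≠ 0 := fun h => ha0 (by rw [hc, h, mul_zero])
        have hcdeg : c.totalDegree ≤ N := by
          have hadeg := a.2
          rw [mem_restrictTotalDegree] at hadeg
          rw [hc, totalDegree_mul_eq hq0 hc0] at hadeg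
          omega
        have hbeq : (b : MvPolynomial (Fin 2) ℂ) = -(c * p) := by
          have hz : q * (c * p + (b : MvPolynomial (Fin 2) ℂ)) = 0 := by
            rw [hc] at habeq
            linear_combination habeq
          rcases mul_eq_zero.mp hz with h | h
          · exact absurd h hq0
          · linear_combination h
        refine ⟨⟨c, by rw [mem_restrictTotalDegree]; exact hcdeg⟩, ?_⟩
        refine Prod.ext (Subtype.ext ?_) (Subtype.ext ?_)
        · show c * q = (a : MvPolynomial (Fin 2) ℂ)
          rw [hc]; ring
        · show -((c : MvPolynomial (Fin 2) ℂ) * p) = (b : MvPolynomial (Fin 2) ℂ)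
          rw [hbeq]
    · rintro _ ⟨c, rfl⟩
      simp only [hφ, hψ, LinearMap.mem_ker, LinearMap.coprod_apply, LinearMap.comp_apply]
      show (c : MvPolynomial (Fin 2) ℂ) * q * p + -((c : MvPolynomial (Fin 2) ℂ) * p) * q = 0
      ring
  have hrange : LinearMap.range φ ≤ restrictTotalDegree (Fin 2) ℂ (m + n + N) := by
    rintro _ ⟨⟨a, b⟩, rfl⟩
    have ha := a.2
    have hb := b.2
    rw [mem_restrictTotalDegree] at ha hb
    show ((a : MvPolynomial (Fin 2) ℂ) * p + (b : MvPolynomial (Fin 2) ℂ) * q) ∈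
      restrictTotalDegree (Fin 2) ℂ (m + n + N)
    rw [mem_restrictTotalDegree]
    refine le_trans (totalDegree_add _ _) ?_
    rw [max_le_iff]
    constructor
    · refine le_trans (totalDegree_mul _ _) ?_; omega
    · refine le_trans (totalDegree_mul _ _) ?_; omega
  set ev : restrictTotalDegree (Fin 2) ℂ (m + n + N) →ₗ[ℂ] (↥S' → ℂ) :=
    (LinearMap.pi fun t : ↥S' => evalLM (t : Fin 2 → ℂ)).comp
      (restrictTotalDegree (Fin 2) ℂ (m + n + N)).subtype with hev
  have hmemZ : ∀ t : ↥S', (t : Fin 2 → ℂ) ∈ Z := fun t => hfin.mem_toFinset.mp t.2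
  have hsurj : Function.Surjective ev := by
    intro g
    set w : ↥S' → MvPolynomial (Fin 2) ℂ := fun t => (interp hfin (hmemZ t)).choose with hw
    have hwspec : ∀ t : ↥S', (w t).totalDegree ≤ hfin.toFinset.card ∧
        eval (t : Fin 2 → ℂ) (w t) = 1 ∧
        ∀ u ∈ Z, u ≠ (t : Fin 2 → ℂ) → eval u (w t) = 0 := fun t =>
      (interp hfin (hmemZ t)).choose_spec
    set f : MvPolynomial (Fin 2) ℂ := ∑ t : ↥S', g t • w t with hf
    have hfmem : f ∈ restrictTotalDegree (Fin 2) ℂ (m + n + N) := by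
      refine Submodule.sum_mem _ fun t _ => Submodule.smul_mem _ _ ?_
      rw [mem_restrictTotalDegree]
      refine le_trans (hwspec t).1 ?_
      have : hfin.toFinset.card = N := hScard
      omega
    refine ⟨⟨f, hfmem⟩, ?_⟩
    funext u
    show eval (u : Fin 2 → ℂ) f = g u
    rw [hf, map_sum, Fintype.sum_eq_single u (fun t ht => by
      rw [smul_eval, ((hwspec t).2.2 (u : Fin 2 → ℂ) (hmemZ u)
        (fun hc => ht.symm (Subtype.ext hc))), mul_zero]),
      smul_eval, (hwspec u).2.1, mul_one]
  have hkerev : Submodule.comap (restrictTotalDegree (Fin 2) ℂ (m + n + N)).subtype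
      (LinearMap.range φ) ≤ LinearMap.ker ev := by
    rintro ⟨f, hfV3⟩ hf
    obtain ⟨⟨a, b⟩, hab⟩ := hf
    rw [LinearMap.mem_ker]
    funext t
    show eval (t : Fin 2 → ℂ) f = 0
    have habf : (a : MvPolynomial (Fin 2) ℂ) * p + (b : MvPolynomial (Fin 2) ℂ) * q = f := by
      simpa [hφ] using hab
    rw [← habf, map_add, map_mul, map_mul, (hmemZ t).1, (hmemZ t).2, mul_zero, mul_zero, add_zero]
  have rk1 : Module.finrank ℂ (LinearMap.range φ) + Module.finrank ℂ (LinearMap.ker φ)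
      = Tc (n + N) + Tc (m + N) := by
    rw [LinearMap.finrank_range_add_finrank_ker φ, Module.finrank_prod, finrank_V, finrank_V]
  have rk2 : Module.finrank ℂ (LinearMap.ker φ) = Tc N := by
    rw [hker, LinearMap.finrank_range_of_inj hψinj, finrank_V]
  have rk3 : Module.finrank ℂ (↥S' → ℂ) + Module.finrank ℂ (LinearMap.ker ev)
      = Tc (m + n + N) := by
    have h := LinearMap.finrank_range_add_finrank_ker ev
    rw [LinearMap.range_eq_top.mpr hsurj, finrank_top, finrank_V] at h
    exact h
  have rk4 : Module.finrank ℂ (↥S' → ℂ) = N := by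
    rw [Module.finrank_pi, Fintype.card_coe, hScard]
  have rk5 : Module.finrank ℂ (LinearMap.range φ) ≤ Module.finrank ℂ (LinearMap.ker ev) := by
    have h1 : Module.finrank ℂ (Submodule.comap
        (restrictTotalDegree (Fin 2) ℂ (m + n + N)).subtype (LinearMap.range φ))
        = Module.finrank ℂ (LinearMap.range φ) :=
      (Submodule.comapSubtypeEquivOfLe hrange).finrank_eq
    rw [← h1]
    exact Submodule.finrank_mono hkerev
  have hid := Tc_identity m n N
  rw [rk4] at rk3
  omega
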